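/- The quadratic Toda bracket π₂, defined on coordinates (a_1,…,a_{N-1}, b_1,…,b_N) by {a_i, a_{i+1}} = ½ a_i a_{i+1}, {a_i, b_i} = -a_i b_i, {a_i, b_{i+1}} = a_i b_{i+1}, {b_i, b_{i+1}} = 2 a_i², all other brackets zero, satisfies the Jacobi identity. -/

import Mathlib

/-- Index set for Toda variables `(a_1, …, a_{N-1}, b_1, …, b_N)` (0-based). -/
abbrev TodaIdx (N : ℕ) := Fin (N - 1) ⊕ Fin N

/-- The value of the `a`-variable with (0-based) index `m`, zero out of range. -/
noncomputable def av {N : ℕ} (x : TodaIdx N → ℝ) (m : ℕ) : ℝ :=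
  if h : m < N - 1 then x (.inl ⟨m, h⟩) else 0

/-- The value of the `b`-variable with (0-based) index `m`, zero out of range. -/
noncomputable def bv {N : ℕ} (x : TodaIdx N → ℝ) (m : ℕ) : ℝ :=
  if h : m < N then x (.inr ⟨m, h⟩) else 0

/-- Structure matrix of the quadratic Toda bracket `π₂`:
`{a_i, a_{i+1}} = ½ a_i a_{i+1}`, `{a_i, b_i} = -a_i b_i`,
`{a_i, b_{i+1}} = a_i b_{i+1}`, `{b_i, b_{i+1}} = 2 a_i²`,
all other coordinate brackets zero. -/
noncomputable def quadP (N : ℕ) : TodaIdx N → TodaIdx N → (TodaIdx N → ℝ) → ℝ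
  | .inl i, .inl j, x =>
      if (j : ℕ) = (i : ℕ) + 1 then (1/2) * av x i * av x j
      else if (i : ℕ) = (j : ℕ) + 1 then -((1/2) * av x j * av x i) else 0
  | .inl i, .inr j, x =>
      if (j : ℕ) = (i : ℕ) then -(av x i * bv x j)
      else if (j : ℕ) = (i : ℕ) + 1 then av x i * bv x j else 0
  | .inr j, .inl i, x =>
      -(if (j : ℕ) = (i : ℕ) then -(av x i * bv x j)
        else if (j : ℕ) = (i : ℕ) + 1 then av x i * bv x j else 0)
  | .inr i, .inr j, x =>
      if (j : ℕ) = (i : ℕ) + 1 then 2 * (av x i)^2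
      else if (i : ℕ) = (j : ℕ) + 1 then -(2 * (av x j)^2) else 0

/-- Partial derivative in the `s`-th coordinate direction. -/
noncomputable def pd {N : ℕ} (f : (TodaIdx N → ℝ) → ℝ) (s : TodaIdx N) (x : TodaIdx N → ℝ) : ℝ :=
  fderiv ℝ f x (Pi.single s 1)


/-- Kronecker delta for the a-direction. -/
def aδ {N : ℕ} (m : ℕ) : TodaIdx N → ℝ
  | .inl k => if m = (k : ℕ) then 1 else 0
  | .inr _ => 0

def bδ {N : ℕ} (m : ℕ) : TodaIdx N → ℝ
  | .inl _ => 0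
  | .inr k => if m = (k : ℕ) then 1 else 0

lemma av_out {N : ℕ} (x : TodaIdx N → ℝ) {m : ℕ} (h : ¬ m < N - 1) : av x m = 0 := dif_neg h
lemma bv_out {N : ℕ} (x : TodaIdx N → ℝ) {m : ℕ} (h : ¬ m < N) : bv x m = 0 := dif_neg h

lemma diff_av {N : ℕ} (m : ℕ) : Differentiable ℝ (fun x : TodaIdx N → ℝ => av x m) := by
  unfold av
  by_cases h : m < N - 1
  · simp only [dif_pos h]
    exact (ContinuousLinearMap.proj (R := ℝ) (φ := fun _ : TodaIdx N => ℝ)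
      (Sum.inl ⟨m, h⟩)).differentiable
  · simp only [dif_neg h]; exact differentiable_const 0

lemma diff_bv {N : ℕ} (m : ℕ) : Differentiable ℝ (fun x : TodaIdx N → ℝ => bv x m) := by
  unfold bv
  by_cases h : m < N
  · simp only [dif_pos h]
    exact (ContinuousLinearMap.proj (R := ℝ) (φ := fun _ : TodaIdx N => ℝ)
      (Sum.inr ⟨m, h⟩)).differentiable
  · simp only [dif_neg h]; exact differentiable_const 0

lemma pd_av {N : ℕ} (m : ℕ) (s : TodaIdx N) (x : TodaIdx N → ℝ) :
    pd (fun x => av x m) s x = aδ m s := by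
  unfold pd av
  by_cases h : m < N - 1
  · simp only [dif_pos h]
    have he : (fun x : TodaIdx N → ℝ => x (Sum.inl ⟨m, h⟩)) =
        (ContinuousLinearMap.proj (R := ℝ) (φ := fun _ : TodaIdx N => ℝ) (Sum.inl ⟨m, h⟩)) := rfl
    rw [he, ContinuousLinearMap.fderiv]
    rw [ContinuousLinearMap.proj_apply]
    rw [Pi.single_apply]
    cases s with
    | inl k =>
      simp only [aδ, Sum.inl.injEq, Fin.mk.injEq]
      simp [Fin.ext_iff, eq_comm]
    | inr k => simp [aδ]
  · simp only [dif_neg h, fderiv_const]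
    cases s with
    | inl k =>
      have : m ≠ (k : ℕ) := by have := k.isLt; omega
      simp [aδ, this]
    | inr k => simp [aδ]

lemma pd_bv {N : ℕ} (m : ℕ) (s : TodaIdx N) (x : TodaIdx N → ℝ) :
    pd (fun x => bv x m) s x = bδ m s := by
  unfold pd bv
  by_cases h : m < N
  · simp only [dif_pos h]
    have he : (fun x : TodaIdx N → ℝ => x (Sum.inr ⟨m, h⟩)) =
        (ContinuousLinearMap.proj (R := ℝ) (φ := fun _ : TodaIdx N => ℝ) (Sum.inr ⟨m, h⟩)) := rfl
    rw [he, ContinuousLinearMap.fderiv]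
    rw [ContinuousLinearMap.proj_apply]
    rw [Pi.single_apply]
    cases s with
    | inr k =>
      simp [bδ, Fin.ext_iff, eq_comm]
    | inl k => simp [bδ]
  · simp only [dif_neg h, fderiv_const]
    cases s with
    | inr k =>
      have : m ≠ (k : ℕ) := by have := k.isLt; omega
      simp [bδ, this]
    | inl k => simp [bδ]

lemma pd_mul {N : ℕ} {f g : (TodaIdx N → ℝ) → ℝ} (s : TodaIdx N) (x : TodaIdx N → ℝ)
    (hf : DifferentiableAt ℝ f x) (hg : DifferentiableAt ℝ g x) :
    pd (fun x => f x * g x) s x = pd f s x * g x + f x * pd g s x := by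
  unfold pd
  rw [fderiv_fun_mul hf hg]
  simp [ContinuousLinearMap.add_apply]
  ring

lemma pd_neg {N : ℕ} {f : (TodaIdx N → ℝ) → ℝ} (s : TodaIdx N) (x : TodaIdx N → ℝ) :
    pd (fun x => -(f x)) s x = -(pd f s x) := by
  unfold pd; rw [fderiv_fun_neg]; simp

lemma pd_const {N : ℕ} (c : ℝ) (s : TodaIdx N) (x : TodaIdx N → ℝ) :
    pd (fun _ => c) s x = 0 := by
  unfold pd; rw [fderiv_fun_const]; simp

/-- nat-indexed bracket with arbitrary coordinate values. -/
noncomputable def Pn (A B : ℕ → ℝ) : ℕ ⊕ ℕ → ℕ ⊕ ℕ → ℝ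
  | .inl i, .inl j =>
      if j = i + 1 then (1/2) * A i * A j
      else if i = j + 1 then -((1/2) * A j * A i) else 0
  | .inl i, .inr j =>
      if j = i then -(A i * B j)
      else if j = i + 1 then A i * B j else 0
  | .inr j, .inl i =>
      -(if j = i then -(A i * B j)
        else if j = i + 1 then A i * B j else 0)
  | .inr i, .inr j =>
      if j = i + 1 then 2 * (A i)^2
      else if i = j + 1 then -(2 * (A j)^2) else 0

def toN {N : ℕ} : TodaIdx N → ℕ ⊕ ℕ
  | .inl i => .inl (i : ℕ)
  | .inr j => .inr (j : ℕ)

lemma quadP_eq_Pn {N : ℕ} (s u : TodaIdx N) (x : TodaIdx N → ℝ) :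
    quadP N s u x = Pn (av x) (bv x) (toN s) (toN u) := by
  cases s <;> cases u <;> rfl

lemma pd_cmul {N : ℕ} {f : (TodaIdx N → ℝ) → ℝ} (c : ℝ) (s : TodaIdx N) (x : TodaIdx N → ℝ)
    (hf : DifferentiableAt ℝ f x) :
    pd (fun x => c * f x) s x = c * pd f s x := by
  unfold pd; rw [fderiv_const_mul hf c]; simp

lemma pd_aa {N : ℕ} (c : ℝ) (i j : ℕ) (s : TodaIdx N) (x : TodaIdx N → ℝ) :
    pd (fun x => c * av x i * av x j) s x = c * (aδ i s * av x j + av x i * aδ j s) := by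
  have h1 : DifferentiableAt ℝ (fun x : TodaIdx N → ℝ => c * av x i) x :=
    ((diff_av (N := N) i) x).const_mul c
  rw [show (fun x : TodaIdx N → ℝ => c * av x i * av x j)
      = (fun x : TodaIdx N → ℝ => (fun x => c * av x i) x * (fun x : TodaIdx N → ℝ => av x j) x)
      from rfl, pd_mul s x h1 ((diff_av (N := N) j) x),
    pd_cmul c s x ((diff_av (N := N) i) x), pd_av, pd_av]
  ring

lemma pd_ab {N : ℕ} (i j : ℕ) (s : TodaIdx N) (x : TodaIdx N → ℝ) :
    pd (fun x => av x i * bv x j) s x = aδ i s * bv x j + av x i * bδ j s := by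
  rw [show (fun x : TodaIdx N → ℝ => av x i * bv x j)
      = (fun x : TodaIdx N → ℝ => (fun x : TodaIdx N → ℝ => av x i) x
          * (fun x : TodaIdx N → ℝ => bv x j) x) from rfl,
    pd_mul s x ((diff_av (N := N) i) x) ((diff_bv (N := N) j) x), pd_av, pd_bv]

lemma pd_sq {N : ℕ} (i : ℕ) (s : TodaIdx N) (x : TodaIdx N → ℝ) :
    pd (fun x => 2 * (av x i)^2) s x = 4 * (av x i * aδ i s) := by
  rw [show (fun x : TodaIdx N → ℝ => 2 * (av x i)^2)
      = (fun x : TodaIdx N → ℝ => 2 * av x i * av x i) from by funext y; ring,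
    pd_aa 2 i i s x]
  ring

noncomputable def dP {N : ℕ} : TodaIdx N → TodaIdx N → TodaIdx N → (TodaIdx N → ℝ) → ℝ
  | .inl i, .inl j => fun s x =>
      (if (j : ℕ) = (i : ℕ) + 1 then (1:ℝ)/2 else if (i : ℕ) = (j : ℕ) + 1 then -(1/2) else 0) *
        (av x j * aδ i s + av x i * aδ j s)
  | .inl i, .inr j => fun s x =>
      (if (j : ℕ) = (i : ℕ) then (-1:ℝ) else if (j : ℕ) = (i : ℕ) + 1 then 1 else 0) *
        (bv x j * aδ i s + av x i * bδ j s)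
  | .inr j, .inl i => fun s x =>
      -((if (j : ℕ) = (i : ℕ) then (-1:ℝ) else if (j : ℕ) = (i : ℕ) + 1 then 1 else 0) *
        (bv x j * aδ i s + av x i * bδ j s))
  | .inr i, .inr j => fun s x =>
      (if (j : ℕ) = (i : ℕ) + 1 then (4:ℝ) else 0) * (av x i * aδ i s)
      + (if (i : ℕ) = (j : ℕ) + 1 then -(4:ℝ) else 0) * (av x j * aδ j s)

lemma pd_quadP {N : ℕ} (v w s : TodaIdx N) (x : TodaIdx N → ℝ) :
    pd (quadP N v w) s x = dP v w s x := by
  cases v with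
  | inl i =>
    cases w with
    | inl j =>
      by_cases h1 : (j : ℕ) = (i : ℕ) + 1
      · rw [show quadP N (.inl i) (.inl j) = fun x => (1/2 : ℝ) * av x ↑i * av x ↑j from by
          funext y; simp [quadP, h1], pd_aa]
        simp only [dP, if_pos h1]; ring
      · by_cases h2 : (i : ℕ) = (j : ℕ) + 1
        · rw [show quadP N (.inl i) (.inl j) = fun x => -((1/2 : ℝ) * av x ↑j * av x ↑i) from by
            funext y; simp only [quadP, if_neg h1, if_pos h2],
            show (fun x : TodaIdx N → ℝ => -((1/2 : ℝ) * av x ↑j * av x ↑i))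
              = (fun x : TodaIdx N → ℝ => -((fun x : TodaIdx N → ℝ => (1/2 : ℝ) * av x ↑j * av x ↑i) x)) from rfl,
            pd_neg, pd_aa]
          simp only [dP, if_neg h1, if_pos h2]; ring
        · rw [show quadP N (.inl i) (.inl j) = fun _ => (0:ℝ) from by
            funext y; simp only [quadP, if_neg h1, if_neg h2], pd_const]
          simp only [dP, if_neg h1, if_neg h2]; ring
    | inr j =>
      by_cases h1 : (j : ℕ) = (i : ℕ)
      · rw [show quadP N (.inl i) (.inr j) = fun x => -(av x ↑i * bv x ↑j) from by
          funext y; simp [quadP, h1],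
          show (fun x : TodaIdx N → ℝ => -(av x ↑i * bv x ↑j))
            = (fun x : TodaIdx N → ℝ => -((fun x : TodaIdx N → ℝ => av x ↑i * bv x ↑j) x)) from rfl,
          pd_neg, pd_ab]
        simp only [dP, if_pos h1]; ring
      · by_cases h2 : (j : ℕ) = (i : ℕ) + 1
        · rw [show quadP N (.inl i) (.inr j) = fun x => av x ↑i * bv x ↑j from by
            funext y; simp only [quadP, if_neg h1, if_pos h2], pd_ab]
          simp only [dP, if_neg h1, if_pos h2]; ring
        · rw [show quadP N (.inl i) (.inr j) = fun _ => (0:ℝ) from by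
            funext y; simp only [quadP, if_neg h1, if_neg h2], pd_const]
          simp only [dP, if_neg h1, if_neg h2]; ring
  | inr j =>
    cases w with
    | inl i =>
      by_cases h1 : (j : ℕ) = (i : ℕ)
      · rw [show quadP N (.inr j) (.inl i) = fun x => -(-(av x ↑i * bv x ↑j)) from by
          funext y; simp [quadP, h1],
          show (fun x : TodaIdx N → ℝ => -(-(av x ↑i * bv x ↑j)))
            = (fun x : TodaIdx N → ℝ => -((fun x : TodaIdx N → ℝ =>
                -((fun x : TodaIdx N → ℝ => av x ↑i * bv x ↑j) x)) x)) from rfl,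
          pd_neg, pd_neg, pd_ab]
        simp only [dP, if_pos h1]; ring
      · by_cases h2 : (j : ℕ) = (i : ℕ) + 1
        · rw [show quadP N (.inr j) (.inl i) = fun x => -(av x ↑i * bv x ↑j) from by
            funext y; simp only [quadP, if_neg h1, if_pos h2],
            show (fun x : TodaIdx N → ℝ => -(av x ↑i * bv x ↑j))
              = (fun x : TodaIdx N → ℝ => -((fun x : TodaIdx N → ℝ => av x ↑i * bv x ↑j) x)) from rfl,
            pd_neg, pd_ab]
          simp only [dP, if_neg h1, if_pos h2]; ring
        · rw [show quadP N (.inr j) (.inl i) = fun _ => (0:ℝ) from by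
            funext y; simp only [quadP, if_neg h1, if_neg h2, neg_zero], pd_const]
          simp only [dP, if_neg h1, if_neg h2]; ring
    | inr i =>
      -- here the pattern is quadP (.inr j') (.inr i') with names (j := first, i := second)
      by_cases h1 : (i : ℕ) = (j : ℕ) + 1
      · rw [show quadP N (.inr j) (.inr i) = fun x => 2 * (av x ↑j)^2 from by
          funext y; simp [quadP, h1], pd_sq]
        simp only [dP, if_pos h1, if_neg (by omega : ¬ (j:ℕ) = (i:ℕ) + 1)]; ring
      · by_cases h2 : (j : ℕ) = (i : ℕ) + 1
        · rw [show quadP N (.inr j) (.inr i) = fun x => -(2 * (av x ↑i)^2) from by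
            funext y; simp only [quadP, if_neg h1, if_pos h2],
            show (fun x : TodaIdx N → ℝ => -(2 * (av x ↑i)^2))
              = (fun x : TodaIdx N → ℝ => -((fun x : TodaIdx N → ℝ => 2 * (av x ↑i)^2) x)) from rfl,
            pd_neg, pd_sq]
          simp only [dP, if_neg h1, if_pos h2]; ring
        · rw [show quadP N (.inr j) (.inr i) = fun _ => (0:ℝ) from by
            funext y; simp only [quadP, if_neg h1, if_neg h2], pd_const]
          simp only [dP, if_neg h1, if_neg h2]; ring

lemma Pn_out_a {N : ℕ} (x : TodaIdx N → ℝ) (u : ℕ ⊕ ℕ) {m : ℕ} (h : ¬ m < N - 1) :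
    Pn (av x) (bv x) (.inl m) u = 0 := by
  cases u with
  | inl j => simp only [Pn]; split_ifs <;> simp [av_out x h]
  | inr j => simp only [Pn]; split_ifs <;> simp [av_out x h]

lemma Pn_out_b {N : ℕ} (x : TodaIdx N → ℝ) (u : ℕ ⊕ ℕ) {m : ℕ} (h : ¬ m < N) :
    Pn (av x) (bv x) (.inr m) u = 0 := by
  cases u with
  | inl j => simp only [Pn]; split_ifs <;> simp [bv_out x h]
  | inr j =>
    simp only [Pn]
    split_ifs with h1 h2
    · rw [av_out x (by omega)]; ring
    · rw [av_out x (by omega)]; ring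
    · rfl

lemma main_a {N : ℕ} (x : TodaIdx N → ℝ) (u : ℕ ⊕ ℕ) (m : ℕ) :
    ∑ s : TodaIdx N, Pn (av x) (bv x) (toN s) u * aδ m s = Pn (av x) (bv x) (.inl m) u := by
  rw [Fintype.sum_sum_type]
  have hb : ∀ k : Fin N, Pn (av x) (bv x) (toN (Sum.inr k)) u * aδ m (Sum.inr k) = 0 := by
    intro k; simp [aδ]
  rw [Finset.sum_congr rfl (fun k _ => hb k), Finset.sum_const_zero, add_zero]
  by_cases h : m < N - 1
  · rw [Finset.sum_eq_single (⟨m, h⟩ : Fin (N - 1))]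
    · simp [toN, aδ]
    · intro k _ hk
      have : ¬ m = (k : ℕ) := by
        intro he; exact hk (by exact (Fin.ext he.symm))
      simp [aδ, this]
    · simp
  · rw [Pn_out_a x u h, Finset.sum_eq_zero]
    intro k _
    have : ¬ m = (k : ℕ) := by have := k.isLt; omega
    simp [aδ, this]

lemma main_b {N : ℕ} (x : TodaIdx N → ℝ) (u : ℕ ⊕ ℕ) (m : ℕ) :
    ∑ s : TodaIdx N, Pn (av x) (bv x) (toN s) u * bδ m s = Pn (av x) (bv x) (.inr m) u := by
  rw [Fintype.sum_sum_type]
  have ha : ∀ k : Fin (N - 1), Pn (av x) (bv x) (toN (Sum.inl k)) u * bδ m (Sum.inl k) = 0 := by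
    intro k; simp [bδ]
  rw [Finset.sum_congr rfl (fun k _ => ha k), Finset.sum_const_zero, zero_add]
  by_cases h : m < N
  · rw [Finset.sum_eq_single (⟨m, h⟩ : Fin N)]
    · simp [toN, bδ]
    · intro k _ hk
      have : ¬ m = (k : ℕ) := by
        intro he; exact hk (by exact (Fin.ext he.symm))
      simp [bδ, this]
    · simp
  · rw [Pn_out_b x u h, Finset.sum_eq_zero]
    intro k _
    have : ¬ m = (k : ℕ) := by have := k.isLt; omega
    simp [bδ, this]

/-- closed form for `∑ s, {s,u} ∂ₛ{v,w}` at nat level. -/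
noncomputable def Ee (A B : ℕ → ℝ) (u : ℕ ⊕ ℕ) : ℕ ⊕ ℕ → ℕ ⊕ ℕ → ℝ
  | .inl i, .inl j =>
      (if j = i + 1 then (1:ℝ)/2 else if i = j + 1 then -(1/2) else 0) *
        (Pn A B (.inl i) u * A j + Pn A B (.inl j) u * A i)
  | .inl i, .inr j =>
      (if j = i then (-1:ℝ) else if j = i + 1 then 1 else 0) *
        (Pn A B (.inl i) u * B j + Pn A B (.inr j) u * A i)
  | .inr j, .inl i =>
      -((if j = i then (-1:ℝ) else if j = i + 1 then 1 else 0) *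
        (Pn A B (.inl i) u * B j + Pn A B (.inr j) u * A i))
  | .inr i, .inr j =>
      (if j = i + 1 then (4:ℝ) else 0) * (Pn A B (.inl i) u * A i)
      + (if i = j + 1 then -(4:ℝ) else 0) * (Pn A B (.inl j) u * A j)

lemma sum_shape {N : ℕ} (F G1 G2 : TodaIdx N → ℝ) (c g1 g2 : ℝ) :
    ∑ s : TodaIdx N, F s * (c * (g1 * G1 s + g2 * G2 s))
      = c * (g1 * ∑ s : TodaIdx N, F s * G1 s) + c * (g2 * ∑ s : TodaIdx N, F s * G2 s) := by
  have h : ∀ s ∈ (Finset.univ : Finset (TodaIdx N)),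
      F s * (c * (g1 * G1 s + g2 * G2 s))
        = c * g1 * (F s * G1 s) + c * g2 * (F s * G2 s) := fun s _ => by ring
  rw [Finset.sum_congr rfl h, Finset.sum_add_distrib, ← Finset.mul_sum, ← Finset.mul_sum]
  ring

lemma sum_shape_neg {N : ℕ} (F G1 G2 : TodaIdx N → ℝ) (c g1 g2 : ℝ) :
    ∑ s : TodaIdx N, F s * (-(c * (g1 * G1 s + g2 * G2 s)))
      = -(c * (g1 * ∑ s : TodaIdx N, F s * G1 s) + c * (g2 * ∑ s : TodaIdx N, F s * G2 s)) := by
  have h : ∀ s ∈ (Finset.univ : Finset (TodaIdx N)),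
      F s * (-(c * (g1 * G1 s + g2 * G2 s)))
        = -(c * g1 * (F s * G1 s) + c * g2 * (F s * G2 s)) := fun s _ => by ring
  rw [Finset.sum_congr rfl h, Finset.sum_neg_distrib, Finset.sum_add_distrib,
    ← Finset.mul_sum, ← Finset.mul_sum]
  ring

lemma sum_shape2 {N : ℕ} (F G1 G2 : TodaIdx N → ℝ) (c1 c2 g1 g2 : ℝ) :
    ∑ s : TodaIdx N, F s * (c1 * (g1 * G1 s) + c2 * (g2 * G2 s))
      = c1 * (g1 * ∑ s : TodaIdx N, F s * G1 s) + c2 * (g2 * ∑ s : TodaIdx N, F s * G2 s) := by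
  have h : ∀ s ∈ (Finset.univ : Finset (TodaIdx N)),
      F s * (c1 * (g1 * G1 s) + c2 * (g2 * G2 s))
        = c1 * g1 * (F s * G1 s) + c2 * g2 * (F s * G2 s) := fun s _ => by ring
  rw [Finset.sum_congr rfl h, Finset.sum_add_distrib, ← Finset.mul_sum, ← Finset.mul_sum]
  ring

lemma sum_term {N : ℕ} (x : TodaIdx N → ℝ) (u v w : TodaIdx N) :
    ∑ s : TodaIdx N, quadP N s u x * pd (quadP N v w) s x
      = Ee (av x) (bv x) (toN u) (toN v) (toN w) := by
  have hq : ∀ s : TodaIdx N, quadP N s u x * pd (quadP N v w) s x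
      = Pn (av x) (bv x) (toN s) (toN u) * dP v w s x := by
    intro s; rw [quadP_eq_Pn, pd_quadP]
  rw [Finset.sum_congr rfl (fun s _ => hq s)]
  cases v with
  | inl i =>
    cases w with
    | inl j =>
      simp only [dP]
      rw [sum_shape _ (aδ ↑i) (aδ ↑j), main_a, main_a]
      simp only [Ee, toN]; ring
    | inr j =>
      simp only [dP]
      rw [sum_shape _ (aδ ↑i) (bδ ↑j), main_a, main_b]
      simp only [Ee, toN]; ring
  | inr j =>
    cases w with
    | inl i =>
      simp only [dP]
      rw [sum_shape_neg _ (aδ ↑i) (bδ ↑j), main_a, main_b]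
      simp only [Ee, toN]; ring
    | inr i =>
      simp only [dP]
      rw [sum_shape2 _ (aδ ↑j) (aδ ↑i), main_a, main_a]
      simp only [Ee, toN]; ring

set_option maxHeartbeats 3200000 in
lemma jacobiNat (A B : ℕ → ℝ) (u v w : ℕ ⊕ ℕ) :
    Ee A B u v w + Ee A B v w u + Ee A B w u v = 0 := by
  rcases u with i | i <;> rcases v with j | j <;> rcases w with k | k <;>
    · simp only [Ee, Pn]
      split_ifs <;> first | (exfalso; omega) | (subst_vars; ring)

/-- The quadratic Toda bracket `π₂` satisfies the Jacobi identity. -/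
theorem quadToda_jacobi (N : ℕ) (x : TodaIdx N → ℝ) (u v w : TodaIdx N) :
    ∑ s : TodaIdx N, (quadP N s u x * pd (quadP N v w) s x
      + quadP N s v x * pd (quadP N w u) s x
      + quadP N s w x * pd (quadP N u v) s x) = 0 := by
  simp only [Finset.sum_add_distrib]
  rw [sum_term x u v w, sum_term x v w u, sum_term x w u v]
  exact jacobiNat (av x) (bv x) (toN u) (toN v) (toN w)
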